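/- Let L be the rank-2 lattice with Gram matrix [[0, n],[n, -2]] for an integer n ≥ 2, and let L' be the lattice with Gram matrix [[0, n],[n, -2m²]] where m is an integer with m² ≢ 1 (mod n). Then L and L' are not isometric. -/

import Mathlib

open Matrix

/-- The rank-2 lattices with Gram matrices `[[0,n],[n,-2]]` (n ≥ 2) and
`[[0,n],[n,-2m²]]` with `m² ≢ 1 (mod n)` are not isometric. -/
theorem stmt3 (n m : ℤ) (hn : 2 ≤ n) (hm : ¬ (n ∣ m ^ 2 - 1)) :
    ¬ ∃ f : (Fin 2 → ℤ) ≃ₗ[ℤ] (Fin 2 → ℤ),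
      ∀ v w : Fin 2 → ℤ,
        (f v) ⬝ᵥ (!![0, n; n, -2 * m ^ 2]).mulVec (f w) =
          v ⬝ᵥ (!![0, n; n, -2]).mulVec w := by
  rintro ⟨f, hf⟩
  apply hm
  have h := hf ![0, 1] ![0, 1]
  set c := f ![0, 1] 0 with hc
  set d := f ![0, 1] 1 with hd
  have hx : ∀ i, f ![0, 1] i = ![c, d] i := by
    intro i; fin_cases i <;> simp [hc, hd]
  rw [funext hx] at h
  simp [dotProduct, Matrix.mulVec, Fin.sum_univ_two] at h
  have key : d * (n * c - m ^ 2 * d) = -1 := by ring_nf; ring_nf at h; linarith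
  have hdu : d = 1 ∨ d = -1 := by
    have : IsUnit d := IsUnit.of_mul_eq_one (a := d) (-(n * c - m ^ 2 * d)) (by linarith [key])
    exact Int.isUnit_iff.mp this
  rcases hdu with h1 | h1
  · rw [h1] at key; exact ⟨c, by linarith⟩
  · rw [h1] at key; exact ⟨-c, by nlinarith [key]⟩
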